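/- For all positive integers r, M and k with k ≤ r, we have (r−k)·C(M+k−1, M−1) + C(M+k−1, M) ≤ C(M+r−1, M). In particular, the refined bound on rank(s^M) for a rank-r sequence with k distinct roots is at most the classical bound C(M+r−1, M). -/
import Mathlib

lemma aux12 (m k : ℕ) : ∀ d, d * (m + k).choose m + (m + k).choose (m + 1)
    ≤ (m + k + d).choose (m + 1) := by
  intro d
  induction d with
  | zero => simp
  | succ d ih =>
    have pascal : (m + k + (d + 1)).choose (m + 1)
        = (m + k + d).choose m + (m + k + d).choose (m + 1) := by
      have : m + k + (d + 1) = (m + k + d) + 1 := by ring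
      rw [this, Nat.choose_succ_succ]
    rw [pascal]
    have h1 : (m + k).choose m ≤ (m + k + d).choose m :=
      Nat.choose_le_choose m (Nat.le_add_right _ _)
    calc (d + 1) * (m + k).choose m + (m + k).choose (m + 1)
        = (m + k).choose m + (d * (m + k).choose m + (m + k).choose (m + 1)) := by ring
      _ ≤ (m + k + d).choose m + (m + k + d).choose (m + 1) := Nat.add_le_add h1 ih

/-- The refined bound is at most the classical one:
`(r−k)·C(M+k−1, M−1) + C(M+k−1, M) ≤ C(M+r−1, M)` for positive `r, M, k` with `k ≤ r`. -/
theorem stmt12 (r M k : ℕ) (hr : 0 < r) (hM : 0 < M) (hk : 0 < k) (hkr : k ≤ r) :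
    (r - k) * (M + k - 1).choose (M - 1) + (M + k - 1).choose M
      ≤ (M + r - 1).choose M := by
  obtain ⟨m, rfl⟩ : ∃ m, M = m + 1 := ⟨M - 1, (Nat.succ_pred_eq_of_pos hM).symm⟩
  obtain ⟨d, rfl⟩ : ∃ d, r = k + d := ⟨r - k, (Nat.add_sub_cancel' hkr).symm⟩
  have h1 : m + 1 + k - 1 = m + k := by omega
  have h2 : m + 1 + (k + d) - 1 = m + k + d := by omega
  have h3 : k + d - k = d := by omega
  have h4 : m + 1 - 1 = m := by omega
  rw [h1, h2, h3, h4]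
  exact aux12 m k d
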